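/- The Neumann heat kernel satisfies the Chapman–Kolmogorov (semigroup) identity: for all s, t > 0, r ∈ [−1,1] and r′ ∈ (−1,1), ∫_{−1}^{1} P_t(r, y) · P_s(y, r′) dy = P_{t+s}(r, r′). -/

import Mathlib

open MeasureTheory

/-- The Gaussian heat kernel on the real line. -/
noncomputable def G (t r r' : ℝ) : ℝ :=
  Real.exp (-(r - r') ^ 2 / (2 * t)) / Real.sqrt (2 * Real.pi * t)

/-- The Neumann heat kernel on `[-1,1]`, obtained from the Gaussian kernel by
the reflection map: for `r' ∈ (-1,1)`,
`P t r r' = ∑_{n∈ℤ} [G t r (r'+4n) + G t r (2−r'+4n)]`, while at the boundary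
`P t r (±1) = ∑_{n∈ℤ} 2·G t r (±1+4n)`. -/
noncomputable def P (t r r' : ℝ) : ℝ :=
  if r' = 1 ∨ r' = -1 then ∑' n : ℤ, 2 * G t r (r' + 4 * n)
  else ∑' n : ℤ, (G t r (r' + 4 * n) + G t r (2 - r' + 4 * n))

open Real
open scoped ENNReal NNReal

/-- Orbit map of the reflection group. -/
noncomputable def o (m : ℤ) (x : ℝ) : ℝ := if Even m then 2 * (m:ℝ) + x else 2 * (m:ℝ) - x

lemma G_nonneg (t r x : ℝ) : 0 ≤ G t r x := div_nonneg (Real.exp_nonneg _) (Real.sqrt_nonneg _)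

lemma G_eq_of_sq {a b c d : ℝ} (t : ℝ) (h : (a - b)^2 = (c - d)^2) : G t a b = G t c d := by
  unfold G; rw [h]

lemma G_symm (t a b : ℝ) : G t a b = G t b a := G_eq_of_sq t (by ring)

lemma G_cont (t r : ℝ) : Continuous (fun x => G t r x) := by
  unfold G; fun_prop

lemma G_cont' (t x : ℝ) : Continuous (fun r => G t r x) := by
  unfold G; fun_prop

lemma summable_exp_int {t : ℝ} (ht : 0 < t) :
    Summable fun m : ℤ => Real.exp (-(m:ℝ)^2/(2*t)) := by
  rw [summable_int_iff_summable_nat_and_neg]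
  constructor <;>
  · refine Summable.of_nonneg_of_le (fun n => (Real.exp_nonneg _)) (fun n => ?_)
      (summable_geometric_of_lt_one (Real.exp_nonneg (-1/(2*t)))
        (Real.exp_lt_one_iff.mpr (div_neg_of_neg_of_pos (by norm_num) (by positivity))))
    rw [← Real.exp_nat_mul]
    push_cast
    apply Real.exp_le_exp.2
    have hn : (n:ℝ) ≤ (n:ℝ)^2 := by
      rcases Nat.eq_zero_or_pos n with h | h
      · simp [h]
      · have : (1:ℝ) ≤ (n:ℝ) := by exact_mod_cast h
        nlinarith
    try simp only [neg_sq]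
    rw [div_le_iff₀ (by positivity)]
    have key : (n:ℝ) * (-1 / (2 * t)) * (2 * t) = -(n:ℝ) := by field_simp
    rw [key]
    linarith

lemma key_bound {t : ℝ} (ht : 0 < t) (r x : ℝ) (m : ℤ) :
    G t r (o m x) ≤ (Real.exp ((|r|+|x|)^2/(2*t)) / Real.sqrt (2*Real.pi*t)) *
      Real.exp (-(m:ℝ)^2/(2*t)) := by
  have hA : 0 ≤ |r| + |x| := by positivity
  have h2 : 2*|(m:ℝ)| - (|r|+|x|) ≤ |r - o m x| := by
    unfold o
    split
    · have e : |2*(m:ℝ)| ≤ |r - (2*m + x)| + (|r| + |x|) := by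
        calc |2*(m:ℝ)| = |(-(r - (2*(m:ℝ)+x))) + (r - x)| := by ring_nf
          _ ≤ |(-(r - (2*(m:ℝ)+x)))| + |r - x| := abs_add_le _ _
          _ ≤ |r - (2*(m:ℝ)+x)| + (|r| + |x|) := by
              rw [abs_neg]
              gcongr
              exact abs_sub _ _
      rw [abs_mul] at e
      simp only [abs_two] at e
      linarith
    · have e : |2*(m:ℝ)| ≤ |r - (2*m - x)| + (|r| + |x|) := by
        calc |2*(m:ℝ)| = |(-(r - (2*(m:ℝ)-x))) + (r + x)| := by ring_nf
          _ ≤ |(-(r - (2*(m:ℝ)-x)))| + |r + x| := abs_add_le _ _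
          _ ≤ |r - (2*(m:ℝ)-x)| + (|r| + |x|) := by
              rw [abs_neg]
              gcongr
              exact abs_add_le _ _
      rw [abs_mul] at e
      simp only [abs_two] at e
      linarith
  have h1 : (m:ℝ)^2 - (|r|+|x|)^2 ≤ (r - o m x)^2 := by
    rcases le_or_gt |(m:ℝ)| (|r|+|x|) with h | h
    · nlinarith [sq_abs (m:ℝ), sq_nonneg (r - o m x), abs_nonneg (m:ℝ)]
    · nlinarith [sq_abs (m:ℝ), sq_abs (r - o m x), abs_nonneg (r - o m x), abs_nonneg (m:ℝ)]
  have hexp : Real.exp (-(r - o m x)^2/(2*t)) ≤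
      Real.exp ((|r|+|x|)^2/(2*t)) * Real.exp (-(m:ℝ)^2/(2*t)) := by
    rw [← Real.exp_add]
    apply Real.exp_le_exp.2
    rw [show (|r|+|x|)^2/(2*t) + -(m:ℝ)^2/(2*t) = -((m:ℝ)^2 - (|r|+|x|)^2)/(2*t) by ring]
    gcongr
  unfold G
  rw [div_mul_eq_mul_div]
  gcongr

lemma summable_G {t : ℝ} (ht : 0 < t) (r x : ℝ) :
    Summable fun m : ℤ => G t r (o m x) :=
  Summable.of_nonneg_of_le (fun m => G_nonneg _ _ _) (fun m => key_bound ht r x m)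
    ((summable_exp_int ht).mul_left _)

lemma tsum_int_even_odd {h : ℤ → ℝ} (hs : Summable h) :
    ∑' m : ℤ, h m = (∑' n : ℤ, h (2*n)) + (∑' n : ℤ, h (2*n+1)) := by
  have h1 : ∑' m : ℤ, h m = ∑' p : ℤ × Fin 2, h ((Int.divModEquiv 2).symm p) :=
    ((Int.divModEquiv 2).symm.tsum_eq h).symm
  have hsum : Summable fun p : ℤ × Fin 2 => h ((Int.divModEquiv 2).symm p) :=
    ((Int.divModEquiv 2).symm.summable_iff).mpr hs
  rw [h1, Summable.tsum_prod' hsum (fun n => Summable.of_finite)]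
  have : ∀ n : ℤ, (∑' j : Fin 2, h ((Int.divModEquiv 2).symm (n, j)))
      = h (2*n) + h (2*n+1) := by
    intro n
    rw [tsum_fintype, Fin.sum_univ_two]
    simp [Int.divModEquiv, mul_comm]
  rw [tsum_congr this]
  exact Summable.tsum_add (hs.comp_injective (fun a b hab => by simpa using hab))
    (hs.comp_injective (fun a b hab => by simpa using hab))

lemma o_even (n : ℤ) (x : ℝ) : o (2*n) x = x + 4*n := by
  simp only [o, if_pos (even_two_mul n)]
  push_cast; ring

lemma o_odd (n : ℤ) (x : ℝ) : o (2*n+1) x = (2 - x) + 4*n := by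
  have : ¬ Even (2*n+1) := by simp [Int.even_add_one, parity_simps]
  simp only [o, if_neg this]
  push_cast; ring

lemma P_eq {t : ℝ} (ht : 0 < t) (r x : ℝ) : P t r x = ∑' m : ℤ, G t r (o m x) := by
  have s0 : Summable fun m : ℤ => G t r (o m x) := summable_G ht r x
  have se : Summable fun n : ℤ => G t r (x + 4*n) :=
    ((s0.comp_injective (fun a b hab => by simpa using hab : Function.Injective (fun n : ℤ => 2*n))).congr
      (fun n => by simp only [Function.comp, o_even]))
  have so : Summable fun n : ℤ => G t r ((2 - x) + 4*n) :=
    ((s0.comp_injective (fun a b hab => by simpa using hab : Function.Injective (fun n : ℤ => 2*n+1))).congr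
      (fun n => by simp only [Function.comp, o_odd]))
  rw [tsum_int_even_odd s0]
  simp only [o_even, o_odd]
  unfold P
  split
  case isTrue hc =>
    rcases hc with h1 | h1 <;> subst h1
    · rw [show (2 - (1:ℝ)) = 1 by norm_num]
      simp_rw [two_mul]
      exact Summable.tsum_add se se
    · have : (∑' n : ℤ, G t r ((2 - (-1:ℝ)) + 4*n)) = ∑' n : ℤ, G t r ((-1:ℝ) + 4*n) := by
        rw [← (Equiv.addRight (1:ℤ)).tsum_eq (fun n : ℤ => G t r ((-1:ℝ) + 4*n))]
        exact tsum_congr (fun n => by norm_num [Equiv.addRight]; apply G_eq_of_sq; push_cast; ring)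
      rw [this]
      simp_rw [two_mul]
      exact Summable.tsum_add se se
  case isFalse hc =>
    exact Summable.tsum_add se so

lemma G_o_even {s : ℝ} {m : ℤ} (hm : Even m) (k : ℤ) (u x : ℝ) :
    G s (o m u) (o k x) = G s u (o (k - m) x) := by
  simp only [o, if_pos hm]
  by_cases hk : Even k
  · rw [if_pos hk, if_pos (by rw [Int.even_sub]; tauto)]
    apply G_eq_of_sq; push_cast; ring
  · rw [if_neg hk, if_neg (by rw [Int.even_sub]; tauto)]
    apply G_eq_of_sq; push_cast; ring

lemma G_o_odd {s : ℝ} {m : ℤ} (hm : ¬ Even m) (k : ℤ) (u x : ℝ) :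
    G s (o m u) (o k x) = G s u (o (m - k) x) := by
  simp only [o, if_neg hm]
  by_cases hk : Even k
  · rw [if_pos hk, if_neg (by rw [Int.even_sub]; tauto)]
    apply G_eq_of_sq; push_cast; ring
  · rw [if_neg hk, if_pos (by rw [Int.even_sub]; tauto)]
    apply G_eq_of_sq; push_cast; ring

lemma P_inv {s : ℝ} (hs : 0 < s) (m : ℤ) (u x : ℝ) : P s (o m u) x = P s u x := by
  rw [P_eq hs, P_eq hs]
  by_cases hm : Even m
  · calc ∑' k : ℤ, G s (o m u) (o k x) = ∑' k : ℤ, G s u (o (k - m) x) :=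
          tsum_congr (fun k => G_o_even hm k u x)
      _ = ∑' k : ℤ, G s u (o k x) := (Equiv.subRight m).tsum_eq (fun k => G s u (o k x))
  · calc ∑' k : ℤ, G s (o m u) (o k x) = ∑' k : ℤ, G s u (o (m - k) x) :=
          tsum_congr (fun k => G_o_odd hm k u x)
      _ = ∑' k : ℤ, G s u (o k x) := (Equiv.subLeft m).tsum_eq (fun k => G s u (o k x))

lemma P_translate {s : ℝ} (hs : 0 < s) (n : ℤ) (u x : ℝ) : P s (u - 4*n) x = P s u x := by
  have h : u - 4*(n:ℝ) = o (-(2*n)) u := by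
    simp only [o, if_pos (by exact (even_two_mul n).neg : Even (-(2*n)))]
    push_cast; ring
  rw [h, P_inv hs]

lemma P_nonneg (s u x : ℝ) : 0 ≤ P s u x := by
  unfold P
  split
  · exact tsum_nonneg (fun n => mul_nonneg (by norm_num) (G_nonneg _ _ _))
  · exact tsum_nonneg (fun n => add_nonneg (G_nonneg _ _ _) (G_nonneg _ _ _))

/-- Uniform bound for the Neumann kernel. -/
noncomputable def CC (s : ℝ) : ℝ :=
  Real.exp (16/(2*s)) / Real.sqrt (2*Real.pi*s) * ∑' m : ℤ, Real.exp (-(m:ℝ)^2/(2*s))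

lemma CC_nonneg (s : ℝ) : 0 ≤ CC s :=
  mul_nonneg (div_nonneg (Real.exp_nonneg _) (Real.sqrt_nonneg _))
    (tsum_nonneg (fun m => Real.exp_nonneg _))

lemma G_o_le {s : ℝ} (hs : 0 < s) {a x : ℝ} (ha : |a| ≤ 3) (hx : |x| ≤ 1) (m : ℤ) :
    G s a (o m x) ≤
      Real.exp (16/(2*s)) / Real.sqrt (2*Real.pi*s) * Real.exp (-(m:ℝ)^2/(2*s)) := by
  refine (key_bound hs a x m).trans ?_
  have hA2 : (|a| + |x|)^2 ≤ 16 := by nlinarith [abs_nonneg a, abs_nonneg x]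
  have h1 : Real.exp ((|a|+|x|)^2/(2*s)) ≤ Real.exp (16/(2*s)) :=
    Real.exp_le_exp.2 ((div_le_div_iff_of_pos_right (by positivity)).mpr hA2)
  refine mul_le_mul_of_nonneg_right ?_ (Real.exp_nonneg _)
  exact (div_le_div_iff_of_pos_right (Real.sqrt_pos.mpr (by positivity))).mpr h1

lemma P_le {s : ℝ} (hs : 0 < s) {a x : ℝ} (ha : |a| ≤ 3) (hx : |x| ≤ 1) :
    P s a x ≤ CC s := by
  rw [P_eq hs]
  have hbd := fun m : ℤ => G_o_le hs ha hx m
  calc ∑' m : ℤ, G s a (o m x)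
      ≤ ∑' m : ℤ, Real.exp (16/(2*s)) / Real.sqrt (2*Real.pi*s) *
          Real.exp (-(m:ℝ)^2/(2*s)) :=
        Summable.tsum_le_tsum hbd (summable_G hs a x) ((summable_exp_int hs).mul_left _)
    _ = CC s := tsum_mul_left

lemma P_le_all {s : ℝ} (hs : 0 < s) {x : ℝ} (hx : |x| ≤ 1) (u : ℝ) :
    P s u x ≤ CC s := by
  set n : ℤ := ⌊(u+1)/4⌋ with hn
  have h1 : (n:ℝ) ≤ (u+1)/4 := Int.floor_le _
  have h2 : (u+1)/4 < n + 1 := Int.lt_floor_add_one _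
  have : P s u x = P s (u - 4*n) x := (P_translate hs n u x).symm
  rw [this]
  exact P_le hs (by rw [abs_le]; constructor <;> linarith) hx

lemma measurable_tsum_int {f : ℤ → ℝ → ℝ} (hm : ∀ k, Measurable fun u => f k u)
    (hs : ∀ u, Summable fun k => f k u) : Measurable fun u => ∑' k, f k u := by
  set e : ℕ ≃ ℤ := (Denumerable.eqv ℤ).symm with he
  have key : ∀ u, Filter.Tendsto (fun N => ∑ i ∈ Finset.range N, f (e i) u)
      Filter.atTop (nhds (∑' k, f k u)) := by
    intro u
    have h1 : HasSum (fun n : ℕ => f (e n) u) (∑' k, f k u) := by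
      rw [← e.tsum_eq (fun k => f k u)]
      exact (e.summable_iff.mpr (hs u)).hasSum
    exact h1.tendsto_sum_nat
  apply measurable_of_tendsto_metrizable
    (fun N => Finset.measurable_sum _ (fun i _ => hm (e i)))
  rw [tendsto_pi_nhds]; exact key

lemma P_meas {s x : ℝ} (hs : 0 < s) : Measurable fun u => P s u x := by
  have h : (fun u => P s u x) = fun u => ∑' k : ℤ, G s u (o k x) :=
    funext (fun u => P_eq hs u x)
  rw [h]
  exact measurable_tsum_int (fun k => (G_cont' s (o k x)).measurable)
    (fun u => summable_G hs u x)
lemma integrable_G {t : ℝ} (ht : 0 < t) (a : ℝ) : Integrable (fun u => G t a u) := by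
  have h : (fun u => G t a u)
      = fun u => Real.exp (-(1/(2*t)) * (u - a)^2) / Real.sqrt (2*Real.pi*t) := by
    funext u; unfold G; congr 1
    apply congrArg Real.exp; ring
  rw [h]
  exact ((integrable_exp_neg_mul_sq (by positivity : (0:ℝ) < 1/(2*t))).comp_sub_right a).div_const _

lemma G_conv {t s : ℝ} (ht : 0 < t) (hs : 0 < s) (a b : ℝ) :
    (∫ u : ℝ, G t a u * G s u b) = G (t+s) a b := by
  set c : ℝ := (t+s)/(2*t*s) with hc
  have hc0 : 0 < c := by positivity
  set m : ℝ := (s*a + t*b)/(t+s) with hm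
  have e1 : ∀ u : ℝ, Real.exp (-(a-u)^2/(2*t)) * Real.exp (-(u-b)^2/(2*s))
      = Real.exp (-(a-b)^2/(2*(t+s))) * Real.exp (-c*(u-m)^2) := by
    intro u
    rw [← Real.exp_add, ← Real.exp_add]
    congr 1
    rw [hc, hm]
    field_simp
    ring
  have e2 : Real.sqrt (2*Real.pi*t) * Real.sqrt (2*Real.pi*s)
      = Real.sqrt (2*Real.pi*(t+s)) * Real.sqrt (Real.pi/c) := by
    rw [← Real.sqrt_mul (by positivity), ← Real.sqrt_mul (by positivity)]
    congr 1
    rw [hc]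
    field_simp
  have hpt : (fun u : ℝ => G t a u * G s u b)
      = fun u => (G (t+s) a b / Real.sqrt (Real.pi/c)) * Real.exp (-c*(u-m)^2) := by
    funext u; unfold G
    rw [div_mul_div_comm, e1 u, e2, div_div, div_mul_eq_mul_div]
  rw [hpt, MeasureTheory.integral_const_mul]
  have e3 : (∫ u : ℝ, Real.exp (-c*(u-m)^2)) = Real.sqrt (Real.pi/c) := by
    have := integral_sub_right_eq_self (fun x => Real.exp (-c*x^2)) m (μ := volume)
    rw [this, integral_gaussian]
  rw [e3, div_mul_cancel₀]
  exact ne_of_gt (Real.sqrt_pos.mpr (by positivity))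
lemma o_cont (m : ℤ) : Continuous fun y : ℝ => o m y := by
  unfold o; by_cases hm : Even m <;> simp only [hm, if_true, if_false] <;> fun_prop

lemma G_le_const {s : ℝ} (hs : 0 < s) (u z : ℝ) : G s u z ≤ 1 / Real.sqrt (2*Real.pi*s) := by
  unfold G
  gcongr
  exact Real.exp_le_one_iff.mpr
    (div_nonpos_of_nonpos_of_nonneg (neg_nonpos.2 (sq_nonneg _)) (by positivity))

lemma integrable_G_mul_G {t s : ℝ} (ht : 0 < t) (hs : 0 < s) (r z : ℝ) :
    Integrable (fun u => G t r u * G s u z) := by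
  apply Integrable.mono' ((integrable_G ht r).mul_const (1 / Real.sqrt (2*Real.pi*s)))
  · exact ((G_cont t r).mul ((G_cont' s z))).aestronglyMeasurable
  · refine Filter.Eventually.of_forall (fun u => ?_)
    rw [Real.norm_eq_abs, abs_of_nonneg (mul_nonneg (G_nonneg _ _ _) (G_nonneg _ _ _))]
    exact mul_le_mul_of_nonneg_left (G_le_const hs u z) (G_nonneg _ _ _)
lemma tiles_iUnion : (⋃ m : ℤ, Set.Ioc (2*(m:ℝ)-1) (2*(m:ℝ)+1)) = Set.univ := by
  ext x
  simp only [Set.mem_iUnion, Set.mem_univ, iff_true, Set.mem_Ioc]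
  refine ⟨⌈(x-1)/2⌉, ?_, ?_⟩
  · have := Int.ceil_lt_add_one ((x-1)/2); linarith
  · have := Int.le_ceil ((x-1)/2); linarith

lemma tiles_disj :
    Pairwise (Function.onFun Disjoint fun m : ℤ => Set.Ioc (2*(m:ℝ)-1) (2*(m:ℝ)+1)) := by
  intro a b hab
  simp only [Function.onFun]
  apply Set.disjoint_left.mpr
  rintro x ⟨h1, h2⟩ ⟨h3, h4⟩
  rcases hab.lt_or_gt with h | h
  · have h5 : (a:ℝ) + 1 ≤ b := by exact_mod_cast Int.add_one_le_iff.mpr h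
    linarith
  · have h5 : (b:ℝ) + 1 ≤ a := by exact_mod_cast Int.add_one_le_iff.mpr h
    linarith

lemma Integrable_G_mul_P {t s : ℝ} (ht : 0 < t) (hs : 0 < s) {r x : ℝ} (hx : |x| ≤ 1) :
    Integrable (fun u => G t r u * P s u x) := by
  apply Integrable.mono' ((integrable_G ht r).const_mul (CC s))
  · exact ((G_cont t r).measurable.mul (P_meas hs)).aestronglyMeasurable
  · refine Filter.Eventually.of_forall (fun u => ?_)
    rw [Real.norm_eq_abs, abs_of_nonneg (mul_nonneg (G_nonneg _ _ _) (P_nonneg _ _ _))]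
    calc G t r u * P s u x ≤ G t r u * CC s :=
          mul_le_mul_of_nonneg_left (P_le_all hs hx u) (G_nonneg _ _ _)
      _ = CC s * G t r u := mul_comm _ _

lemma step_right {t s : ℝ} (ht : 0 < t) (hs : 0 < s) {r x : ℝ} (hx : |x| ≤ 1) :
    (∫ u : ℝ, G t r u * P s u x) = P (t+s) r x := by
  have h1 : ∀ u : ℝ, G t r u * P s u x = ∑' k : ℤ, G t r u * G s u (o k x) := by
    intro u
    rw [P_eq hs, ← tsum_mul_left]
  simp only [h1]
  rw [integral_tsum
    (f := fun k u => G t r u * G s u (o k x))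
    (fun k => ((G_cont t r).mul (G_cont' s (o k x))).aestronglyMeasurable) ?fin]
  case fin =>
    have e : ∀ k : ℤ, (∫⁻ u, ‖G t r u * G s u (o k x)‖₊ ∂volume)
        = ENNReal.ofReal (G (t+s) r (o k x)) := by
      intro k
      calc (∫⁻ u, ‖G t r u * G s u (o k x)‖₊ ∂volume)
          = ∫⁻ u, ENNReal.ofReal (G t r u * G s u (o k x)) ∂volume :=
            lintegral_congr (fun u => Real.enorm_eq_ofReal
              (mul_nonneg (G_nonneg _ _ _) (G_nonneg _ _ _)))
        _ = ENNReal.ofReal (∫ u, G t r u * G s u (o k x)) :=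
            (ofReal_integral_eq_lintegral_ofReal (integrable_G_mul_G ht hs r _)
              (Filter.Eventually.of_forall
                (fun u => mul_nonneg (G_nonneg _ _ _) (G_nonneg _ _ _)))).symm
        _ = ENNReal.ofReal (G (t+s) r (o k x)) := by rw [G_conv ht hs]
    rw [show (∑' i : ℤ, ∫⁻ a, ‖G t r a * G s a (o i x)‖ₑ ∂volume) = _ from tsum_congr e,
      ← ENNReal.ofReal_tsum_of_nonneg (fun k => G_nonneg _ _ _) (summable_G (by linarith) r x)]
    exact ENNReal.ofReal_ne_top
  have h2 : ∀ k : ℤ, (∫ u : ℝ, G t r u * G s u (o k x)) = G (t+s) r (o k x) :=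
    fun k => G_conv ht hs r (o k x)
  rw [tsum_congr h2, ← P_eq (by linarith) r x]
/-- Chapman–Kolmogorov identity for the Neumann heat kernel:
`∫_{−1}^{1} P_t(r,y)·P_s(y,r') dy = P_{t+s}(r,r')`. -/
theorem neumann_kernel_chapman_kolmogorov (s t : ℝ) (hs : 0 < s) (ht : 0 < t)
    (r : ℝ) (hr : r ∈ Set.Icc (-1 : ℝ) 1)
    (r' : ℝ) (hr' : r' ∈ Set.Ioo (-1 : ℝ) 1) :
    ∫ y in (-1 : ℝ)..1, P t r y * P s y r' = P (t + s) r r' := by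
  obtain ⟨hr1, hr2⟩ := hr
  obtain ⟨hr'1, hr'2⟩ := hr'
  have hrabs : |r| ≤ 1 := abs_le.mpr ⟨hr1, hr2⟩
  have hr'abs : |r'| ≤ 1 := abs_le.mpr ⟨le_of_lt hr'1, le_of_lt hr'2⟩
  rw [intervalIntegral.integral_of_le (by norm_num : (-1:ℝ) ≤ 1)]
  have h1 : ∀ y : ℝ, P t r y * P s y r' = ∑' m : ℤ, G t r (o m y) * P s y r' := by
    intro y
    calc P t r y * P s y r' = (∑' m : ℤ, G t r (o m y)) * P s y r' := by rw [P_eq ht]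
      _ = ∑' m : ℤ, G t r (o m y) * P s y r' := tsum_mul_right.symm
  simp only [h1]
  -- swap sum and integral
  set bd : ℤ → ℝ := fun m =>
    Real.exp (16/(2*t)) / Real.sqrt (2*Real.pi*t) * Real.exp (-(m:ℝ)^2/(2*t)) * CC s * 2
    with hbd_def
  have hbd_nonneg : ∀ m : ℤ, 0 ≤ bd m := by
    intro m
    apply mul_nonneg (mul_nonneg (mul_nonneg ?_ (Real.exp_nonneg _)) (CC_nonneg s)) (by norm_num)
    exact div_nonneg (Real.exp_nonneg _) (Real.sqrt_nonneg _)
  have hbd_sum : Summable bd := (((summable_exp_int ht).mul_left _).mul_right _).mul_right _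
  have hmeas : ∀ m : ℤ, AEStronglyMeasurable (fun y => G t r (o m y) * P s y r')
      (volume.restrict (Set.Ioc (-1:ℝ) 1)) := by
    intro m
    exact (((G_cont t r).comp (o_cont m)).measurable.mul (P_meas hs)).aestronglyMeasurable
  rw [integral_tsum hmeas ?fin]
  case fin =>
    have e : ∀ m : ℤ, (∫⁻ y in Set.Ioc (-1:ℝ) 1, ‖G t r (o m y) * P s y r'‖₊ ∂volume)
        ≤ ENNReal.ofReal (bd m) := by
      intro m
      have hb : ∀ y ∈ Set.Ioc (-1:ℝ) 1, (‖G t r (o m y) * P s y r'‖₊ : ℝ≥0∞)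
          ≤ ENNReal.ofReal (bd m / 2) := by
        intro y hy
        have hy1 : |y| ≤ 1 := abs_le.mpr ⟨le_of_lt hy.1, hy.2⟩
        rw [← enorm_eq_nnnorm, Real.enorm_eq_ofReal (mul_nonneg (G_nonneg _ _ _) (P_nonneg _ _ _))]
        apply ENNReal.ofReal_le_ofReal
        have hG := G_o_le ht (by linarith [abs_nonneg r] : |r| ≤ 3) hy1 m
        have hP := P_le_all hs hr'abs y
        rw [hbd_def]
        have : Real.exp (16/(2*t)) / Real.sqrt (2*Real.pi*t) * Real.exp (-(m:ℝ)^2/(2*t))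
            * CC s * 2 / 2
            = Real.exp (16/(2*t)) / Real.sqrt (2*Real.pi*t) * Real.exp (-(m:ℝ)^2/(2*t))
            * CC s := by ring
        rw [this]
        exact mul_le_mul hG hP (P_nonneg _ _ _)
          (mul_nonneg (div_nonneg (Real.exp_nonneg _) (Real.sqrt_nonneg _)) (Real.exp_nonneg _))
      calc (∫⁻ y in Set.Ioc (-1:ℝ) 1, ‖G t r (o m y) * P s y r'‖₊ ∂volume)
          ≤ ∫⁻ _ in Set.Ioc (-1:ℝ) 1, ENNReal.ofReal (bd m / 2) ∂volume :=
            setLIntegral_mono measurable_const hb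
        _ = ENNReal.ofReal (bd m / 2) * volume (Set.Ioc (-1:ℝ) 1) := setLIntegral_const _ _
        _ = ENNReal.ofReal (bd m / 2) * ENNReal.ofReal 2 := by
            rw [Real.volume_Ioc]; norm_num
        _ = ENNReal.ofReal (bd m / 2 * 2) := (ENNReal.ofReal_mul (div_nonneg (hbd_nonneg m) (by norm_num))).symm
        _ = ENNReal.ofReal (bd m) := by rw [div_mul_cancel₀]; norm_num
    refine ne_of_lt (lt_of_le_of_lt (le_trans (ENNReal.tsum_le_tsum e)
      (le_of_eq (ENNReal.ofReal_tsum_of_nonneg hbd_nonneg hbd_sum).symm))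
      ENNReal.ofReal_lt_top)
  -- transform each summand into a tile integral
  have hterm : ∀ m : ℤ, (∫ y in Set.Ioc (-1:ℝ) 1, G t r (o m y) * P s y r')
      = ∫ u in Set.Ioc (2*(m:ℝ)-1) (2*(m:ℝ)+1), G t r u * P s u r' := by
    intro m
    rw [← intervalIntegral.integral_of_le (by norm_num : (-1:ℝ) ≤ 1),
      ← intervalIntegral.integral_of_le (by linarith : 2*(m:ℝ)-1 ≤ 2*(m:ℝ)+1)]
    by_cases hm : Even m
    · obtain ⟨n, hn⟩ := hm
      have hfun : ∀ y : ℝ, G t r (o m y) * P s y r'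
          = (fun u => G t r u * P s u r') (y + 2*(m:ℝ)) := by
        intro y
        simp only
        have hm' : Even m := ⟨n, hn⟩
        have h2 : o m y = y + 2*(m:ℝ) := by
          simp only [o, hm', if_true]; ring
        have h3 : P s (y + 2*(m:ℝ)) r' = P s y r' := by
          have h4 : y + 2*(m:ℝ) = y - 4*((-n : ℤ):ℝ) := by
            push_cast [hn]; ring
          rw [h4, P_translate hs]
        rw [h2, h3]
      simp only [hfun]
      rw [intervalIntegral.integral_comp_add_right (fun u => G t r u * P s u r') (2*(m:ℝ))]
      congr 1 <;> ring
    · have hfun : ∀ y : ℝ, G t r (o m y) * P s y r'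
          = (fun u => G t r u * P s u r') (2*(m:ℝ) - y) := by
        intro y
        simp only
        have h2 : o m y = 2*(m:ℝ) - y := by
          simp only [o, if_neg hm]
        have h3 : P s (2*(m:ℝ) - y) r' = P s y r' := by
          rw [show (2*(m:ℝ) - y) = o m y from h2.symm, P_inv hs]
        rw [h2, h3]
      simp only [hfun]
      rw [intervalIntegral.integral_comp_sub_left (fun u => G t r u * P s u r') (2*(m:ℝ))]
      congr 1 <;> ring
  rw [tsum_congr hterm]
  rw [← MeasureTheory.integral_iUnion (fun m : ℤ => measurableSet_Ioc) tiles_disj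
    ((Integrable_G_mul_P ht hs hr'abs).integrableOn)]
  rw [tiles_iUnion, Measure.restrict_univ]
  exact step_right ht hs hr'abs
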